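/- Let M = Z ρ̂⁻¹ ∈ ℝ^{n×p} with truncated rank-r SVD M_r = Û'_r Ŝ'_r (V̂'_r)ᵀ and residual M − M_r = Û'_⊥ Ŝ'_⊥ (V̂'_⊥)ᵀ. Let L ∈ ℝ^{n×p} have rank r with right-singular basis V' and suppose β* ∈ col(V'). Then for any β̂ ∈ ℝ^p: ‖M β̂ − M_r β̂‖₂ ≤ ‖M − L‖_op · ( ‖β̂ − β*‖₂ + ‖V̂'_r (V̂'_r)ᵀ − V'(V')ᵀ‖_op ‖β*‖₂ ). -/

import Mathlib

open Matrix

/-- ℓ₂ norm of a vector in `ℝⁿ`. -/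
noncomputable def l2 {n : ℕ} (v : Fin n → ℝ) : ℝ := Real.sqrt (∑ i, v i ^ 2)

/-- Operator (spectral) norm of a real matrix, via the induced Euclidean operator norm. -/
noncomputable def opnorm {n p : ℕ} (M : Matrix (Fin n) (Fin p) ℝ) : ℝ :=
  ‖LinearMap.toContinuousLinearMap (Matrix.toEuclideanLin M)‖

lemma l2_eq_norm {n : ℕ} (v : Fin n → ℝ) :
    l2 v = ‖(WithLp.equiv 2 (Fin n → ℝ)).symm v‖ := by
  rw [EuclideanSpace.norm_eq, l2]
  congr 1
  exact Finset.sum_congr rfl fun i _ => by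
    simp [WithLp.equiv_symm_apply, PiLp.toLp_apply, Real.norm_eq_abs, sq_abs]

lemma l2_nonneg {n : ℕ} (v : Fin n → ℝ) : 0 ≤ l2 v := Real.sqrt_nonneg _

lemma opnorm_nonneg {n p : ℕ} (M : Matrix (Fin n) (Fin p) ℝ) : 0 ≤ opnorm M :=
  norm_nonneg _

lemma l2_mulVec_le {n p : ℕ} (M : Matrix (Fin n) (Fin p) ℝ) (v : Fin p → ℝ) :
    l2 (M *ᵥ v) ≤ opnorm M * l2 v := by
  rw [l2_eq_norm, l2_eq_norm, WithLp.equiv_symm_apply, ← Matrix.toEuclideanLin_apply_piLp_toLp]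
  exact (LinearMap.toContinuousLinearMap (Matrix.toEuclideanLin M)).le_opNorm _

lemma l2_add_le {n : ℕ} (a b : Fin n → ℝ) : l2 (a + b) ≤ l2 a + l2 b := by
  rw [l2_eq_norm, l2_eq_norm, l2_eq_norm]
  exact norm_add_le ((WithLp.equiv 2 (Fin n → ℝ)).symm a) ((WithLp.equiv 2 (Fin n → ℝ)).symm b)

lemma dot_self_mulVec {n p : ℕ} (A : Matrix (Fin n) (Fin p) ℝ) (y : Fin p → ℝ) :
    (A *ᵥ y) ⬝ᵥ (A *ᵥ y) = y ⬝ᵥ ((Aᵀ * A) *ᵥ y) := by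
  calc (A *ᵥ y) ⬝ᵥ (A *ᵥ y) = ((A *ᵥ y) ᵥ* A) ⬝ᵥ y := Matrix.dotProduct_mulVec _ _ _
    _ = ((y ᵥ* Aᵀ) ᵥ* A) ⬝ᵥ y := by rw [Matrix.vecMul_transpose]
    _ = (y ᵥ* (Aᵀ * A)) ⬝ᵥ y := by rw [Matrix.vecMul_vecMul]
    _ = y ⬝ᵥ ((Aᵀ * A) *ᵥ y) := (Matrix.dotProduct_mulVec y _ y).symm

lemma l2_neg {n : ℕ} (v : Fin n → ℝ) : l2 (-v) = l2 v := by
  simp [l2, neg_sq]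

lemma sum_sq_eq_dot {n : ℕ} (v : Fin n → ℝ) : (∑ i, v i ^ 2) = v ⬝ᵥ v := by
  simp [dotProduct, sq]

lemma dot_self_nonneg {n : ℕ} (v : Fin n → ℝ) : 0 ≤ v ⬝ᵥ v :=
  Finset.sum_nonneg fun i _ => mul_self_nonneg _

lemma l2_proj_le {p r : ℕ} (Vr : Matrix (Fin p) (Fin r) ℝ)
    (Vperp : Matrix (Fin p) (Fin (p - r)) ℝ)
    (hVperp : Vperp.transpose * Vperp = 1)
    (hcompl : Vr * Vr.transpose + Vperp * Vperp.transpose = 1)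
    (x : Fin p → ℝ) :
    l2 ((Vperp * Vperp.transpose) *ᵥ x) ≤ l2 x := by
  rw [← Matrix.mulVec_mulVec]
  have hiso : l2 (Vperp *ᵥ (Vperpᵀ *ᵥ x)) = l2 (Vperpᵀ *ᵥ x) := by
    unfold l2
    rw [sum_sq_eq_dot, sum_sq_eq_dot, dot_self_mulVec, hVperp, Matrix.one_mulVec]
  rw [hiso]
  unfold l2
  apply Real.sqrt_le_sqrt
  rw [sum_sq_eq_dot, sum_sq_eq_dot, dot_self_mulVec, Matrix.transpose_transpose]
  have h1 : x ⬝ᵥ x = x ⬝ᵥ ((Vr * Vrᵀ) *ᵥ x) + x ⬝ᵥ ((Vperp * Vperpᵀ) *ᵥ x) := by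
    rw [← dotProduct_add, ← Matrix.add_mulVec, hcompl, Matrix.one_mulVec]
  have h2 : 0 ≤ x ⬝ᵥ ((Vr * Vrᵀ) *ᵥ x) := by
    have h := dot_self_nonneg (Vrᵀ *ᵥ x)
    rwa [dot_self_mulVec, Matrix.transpose_transpose] at h
  linarith

/-- implicit cleaning via projection geometry: let `M` have truncated
rank-`r` SVD `M_r` (a best rank-`r` approximation, with right-singular basis `V̂'_r` and
residual supported on the complementary right-singular basis `V̂'_⊥`), let `L` have rank
`r` with right-singular basis `V'`, and `β* ∈ col(V')`.  Then for any `β̂`: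
`‖Mβ̂ − M_rβ̂‖₂ ≤ ‖M − L‖_op (‖β̂ − β*‖₂ + ‖V̂'_r(V̂'_r)ᵀ − V'(V')ᵀ‖_op ‖β*‖₂)`. -/
theorem implicit_cleaning_bound {n p r : ℕ}
    (M Mr L : Matrix (Fin n) (Fin p) ℝ)
    (Vr V' : Matrix (Fin p) (Fin r) ℝ) (Vperp : Matrix (Fin p) (Fin (p - r)) ℝ)
    -- orthonormal right-singular bases, complementary projections
    (hVr : Vr.transpose * Vr = 1) (hVperp : Vperp.transpose * Vperp = 1)
    (hV' : V'.transpose * V' = 1)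
    (hcompl : Vr * Vr.transpose + Vperp * Vperp.transpose = 1)
    -- the residual M − M_r has rows supported on the span of V̂'_⊥
    (hres : M - Mr = (M - Mr) * (Vperp * Vperp.transpose))
    -- M_r is a best rank-r approximation of M (truncated SVD), with rank ≤ r
    (hMr_rank : Mr.rank ≤ r)
    (hbest : ∀ L' : Matrix (Fin n) (Fin p) ℝ, L'.rank ≤ r →
      opnorm (M - Mr) ≤ opnorm (M - L'))
    -- L has rank r with right-singular basis V'
    (hL_rank : L.rank = r)
    (hLrow : L = L * (V' * V'.transpose))
    (βhat βstar : Fin p → ℝ)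
    -- β* lies in the column span of V'
    (hβ : (V' * V'.transpose) *ᵥ βstar = βstar) :
    l2 (M *ᵥ βhat - Mr *ᵥ βhat)
      ≤ opnorm (M - L)
          * (l2 (βhat - βstar)
              + opnorm (Vr * Vr.transpose - V' * V'.transpose) * l2 βstar) := by
  have hEv : M *ᵥ βhat - Mr *ᵥ βhat
      = (M - Mr) *ᵥ ((Vperp * Vperpᵀ) *ᵥ βhat) := by
    rw [Matrix.mulVec_mulVec, ← hres, Matrix.sub_mulVec]
  have hsplit : (Vperp * Vperpᵀ) *ᵥ βhat
      = (Vperp * Vperpᵀ) *ᵥ (βhat - βstar) + (Vperp * Vperpᵀ) *ᵥ βstar := by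
    rw [← Matrix.mulVec_add, sub_add_cancel]
  have hstar : (Vperp * Vperpᵀ) *ᵥ βstar = (V' * V'ᵀ - Vr * Vrᵀ) *ᵥ βstar := by
    have hPeq : Vperp * Vperpᵀ = 1 - Vr * Vrᵀ := eq_sub_of_add_eq' hcompl
    rw [hPeq, Matrix.sub_mulVec, Matrix.sub_mulVec, Matrix.one_mulVec, hβ]
  have hstar_le : l2 ((Vperp * Vperpᵀ) *ᵥ βstar)
      ≤ opnorm (Vr * Vrᵀ - V' * V'ᵀ) * l2 βstar := by
    rw [hstar, show V' * V'ᵀ - Vr * Vrᵀ = -(Vr * Vrᵀ - V' * V'ᵀ) from (neg_sub _ _).symm,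
      Matrix.neg_mulVec, l2_neg]
    exact l2_mulVec_le _ _
  rw [hEv]
  calc l2 ((M - Mr) *ᵥ ((Vperp * Vperpᵀ) *ᵥ βhat))
      ≤ opnorm (M - Mr) * l2 ((Vperp * Vperpᵀ) *ᵥ βhat) := l2_mulVec_le _ _
    _ ≤ opnorm (M - L)
        * (l2 (βhat - βstar) + opnorm (Vr * Vrᵀ - V' * V'ᵀ) * l2 βstar) := by
        apply mul_le_mul (hbest L (le_of_eq hL_rank)) ?_ (l2_nonneg _) (opnorm_nonneg _)
        calc l2 ((Vperp * Vperpᵀ) *ᵥ βhat)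
            ≤ l2 ((Vperp * Vperpᵀ) *ᵥ (βhat - βstar))
              + l2 ((Vperp * Vperpᵀ) *ᵥ βstar) := by rw [hsplit]; exact l2_add_le _ _
          _ ≤ l2 (βhat - βstar) + opnorm (Vr * Vrᵀ - V' * V'ᵀ) * l2 βstar :=
              add_le_add (l2_proj_le Vr Vperp hVperp hcompl _) hstar_le
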